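/- For all 2×2 real matrices A and B, ⟨A,B⟩⟨cof A,B⟩ + ⟨ZA,B⟩⟨AZ,B⟩ = ½⟨cof A,A⟩|B|² + ½⟨cof B,B⟩|A|². -/
import Mathlib

open Matrix

noncomputable section

/-- `M²`: the space of 2×2 real matrices. -/
abbrev M2 : Type := Matrix (Fin 2) (Fin 2) ℝ

/-- Frobenius inner product `⟨A,B⟩ = tr(AᵀB)`. -/
def mip (A B : M2) : ℝ := (Aᵀ * B).trace

/-- Frobenius norm `|A| = ⟨A,A⟩^{1/2}`. -/
def fnorm (A : M2) : ℝ := Real.sqrt (mip A A)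

/-- The matrix Z = [[0,−1],[1,0]]. -/
def Zm : M2 := !![0, -1; 1, 0]

/-- The matrix K = [[1,0],[0,−1]]. -/
def Km : M2 := !![1, 0; 0, -1]

/-- The matrix M = [[0,1],[1,0]]. -/
def Mm : M2 := !![0, 1; 1, 0]

/-- Cofactor: cof [[a,b],[c,d]] = [[d,−c],[−b,a]]. -/
def cofm (A : M2) : M2 := !![A 1 1, -(A 1 0); -(A 0 1), A 0 0]

/-- Membership in SO(2,ℝ). -/
def isSO (U : M2) : Prop := U.det = 1 ∧ U⁻¹ = Uᵀ

/-- The rotation U(θ) = cos θ·I + sin θ·Z. -/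
def Um (θ : ℝ) : M2 := Real.cos θ • (1 : M2) + Real.sin θ • Zm

/-- Invariant X₁(A,B) = ½|B|² + (κ/2)|A|². -/
def X1 (κ : ℝ) (A B : M2) : ℝ := (1/2) * mip B B + (κ/2) * mip A A

/-- Invariant X₂(A,B) = ½⟨ZA − AZ, B⟩. -/
def X2 (A B : M2) : ℝ := (1/2) * mip (Zm * A - A * Zm) B

/-- Invariant X₃(A,B) = ½⟨ZA + AZ, B⟩. -/
def X3 (A B : M2) : ℝ := (1/2) * mip (Zm * A + A * Zm) B

/-- Lagrange multiplier Λ(A,B) = 2(κ − det B)/|A|². -/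
def Lam (κ : ℝ) (A B : M2) : ℝ := 2 * (κ - B.det) / (mip A A)

attribute [local instance] Matrix.normedAddCommGroup Matrix.normedSpace

/-- the quadratic identity of Lemma `metaid`. -/
lemma mip_expand (A B : M2) :
    mip A B = A 0 0 * B 0 0 + A 1 0 * B 1 0 + A 0 1 * B 0 1 + A 1 1 * B 1 1 := by
  simp [mip, trace, Matrix.mul_apply, Fin.sum_univ_two]
  ring

lemma ZmA (A : M2) : Zm * A = !![-(A 1 0), -(A 1 1); A 0 0, A 0 1] := by
  ext i j
  fin_cases i <;> fin_cases j <;>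
    simp [Zm, Matrix.mul_apply, Fin.sum_univ_two]

lemma AZm (A : M2) : A * Zm = !![A 0 1, -(A 0 0); A 1 1, -(A 1 0)] := by
  ext i j
  fin_cases i <;> fin_cases j <;>
    simp [Zm, Matrix.mul_apply, Fin.sum_univ_two]

theorem metaid (A B : M2) :
    mip A B * mip (cofm A) B + mip (Zm * A) B * mip (A * Zm) B
      = (1/2) * mip (cofm A) A * mip B B + (1/2) * mip (cofm B) B * mip A A := by
  rw [ZmA, AZm]
  simp only [mip_expand, cofm]
  norm_num [Matrix.cons_val_zero, Matrix.cons_val_one, Matrix.head_cons]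
  ring
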